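/- There exists a constant C ≥ 0 such that for every positive integer n, M_Schur(n,3) ≤ n²/67 + C·n; that is, there is a 3-coloring of [n] under which the number of monochromatic ordered triples (x,y,z) ∈ [n]³ with x + y = z is at most n²/67 + C·n. -/

import Mathlib

open Finset

/-- A good 3-coloring pattern of 67 blocks. -/
def patL : List (Fin 3) :=
  [0,0,0,0,0,0,0,0,0,0,1,1,1,1,1,1,1,1,1,1,1,1,1,1,0,0,2,2,2,2,2,2,2,2,
   2,2,2,2,2,2,2,2,2,2,2,2,2,2,2,2,2,2,2,2,0,1,1,1,1,1,1,1,1,1,1,1,0]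

def pat (i : ℕ) : Fin 3 := patL.getD i 0

/-- Upper bound (in units of triangles) on the number of monochromatic pairs in
block pair `(i,k)`. -/
def cnt (i k : ℕ) : ℕ :=
  (if i ≤ k ∧ pat i = pat (k-i) ∧ pat (k-i) = pat k then 1 else 0) +
  (if i < k ∧ pat i = pat (k-i-1) ∧ pat (k-i-1) = pat k then 1 else 0)

set_option maxRecDepth 100000 in
lemma cnt_sum : (∑ i ∈ range 67, ∑ k ∈ range 67, cnt i k) = 134 := by decide

/-- The set of pairs `(x,z)` coming from monochromatic Schur triples. -/
def Spairs (t n : ℕ) : Finset (ℕ × ℕ) :=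
  ((Finset.Icc 1 n) ×ˢ (Finset.Icc 1 n)).filter (fun q =>
    q.1 < q.2 ∧ pat ((q.1 - 1)/t) = pat ((q.2 - q.1 - 1)/t) ∧
      pat ((q.2 - q.1 - 1)/t) = pat ((q.2 - 1)/t))

def cell (t n i k : ℕ) : Finset (ℕ × ℕ) :=
  (Spairs t n).filter (fun q => (q.1 - 1)/t = i ∧ (q.2 - 1)/t = k)

lemma cell_facts {t n i k : ℕ} (ht : 0 < t) {q : ℕ × ℕ} (hq : q ∈ cell t n i k) :
    pat i = pat ((q.2 - q.1 - 1)/t) ∧ pat ((q.2 - q.1 - 1)/t) = pat k ∧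
    t*i + 1 ≤ q.1 ∧ q.1 ≤ t*i + t ∧
    t*k + 1 ≤ q.2 ∧ q.2 ≤ t*k + t ∧
    t*((q.2 - q.1 - 1)/t) + 1 ≤ q.2 - q.1 ∧ q.2 - q.1 ≤ t*((q.2 - q.1 - 1)/t) + t ∧
    i + (q.2 - q.1 - 1)/t ≤ k ∧ k ≤ i + (q.2 - q.1 - 1)/t + 1 := by
  obtain ⟨x, z⟩ := q
  simp only [cell, Spairs, Finset.mem_filter, Finset.mem_product, Finset.mem_Icc] at hq
  obtain ⟨⟨⟨⟨hx1, hxn⟩, hz1, hzn⟩, hxz, hp1, hp2⟩, hi, hk⟩ := hq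
  simp only at hp1 hp2 hi hk ⊢
  set j := (z - x - 1)/t with hj
  have d1 := Nat.div_add_mod (x - 1) t
  have d2 := Nat.div_add_mod (z - 1) t
  have d3 := Nat.div_add_mod (z - x - 1) t
  rw [hi] at d1
  rw [hk] at d2
  rw [← hj] at d3
  have m1 : (x - 1) % t < t := Nat.mod_lt _ ht
  have m2 : (z - 1) % t < t := Nat.mod_lt _ ht
  have m3 : (z - x - 1) % t < t := Nat.mod_lt _ ht
  rw [hi] at hp1
  rw [hk] at hp2
  have hle1 : i + j ≤ k := by
    have h : t*(i+j) < t*(k+1) := by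
      rw [Nat.mul_add, Nat.mul_add, Nat.mul_one]; omega
    have := Nat.lt_of_mul_lt_mul_left h
    omega
  have hle2 : k ≤ i + j + 1 := by
    have h : t*k < t*(i+j+2) := by
      rw [Nat.mul_add, Nat.mul_add]; omega
    have := Nat.lt_of_mul_lt_mul_left h
    omega
  exact ⟨hp1, hp2, by omega, by omega, by omega, by omega, by omega, by omega, hle1, hle2⟩

lemma tri_card (t : ℕ) :
    ((range t).sigma (fun u => range (u+1))).card = ∑ u ∈ range t, (u+1) := by
  rw [Finset.card_sigma]
  simp

lemma cellA (t n i k : ℕ) (ht : 0 < t) :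
    ((cell t n i k).filter (fun q => (q.2 - q.1 - 1)/t = k - i)).card ≤
      (if i ≤ k ∧ pat i = pat (k-i) ∧ pat (k-i) = pat k then 1 else 0) *
        (∑ u ∈ range t, (u+1)) := by
  by_cases hC : i ≤ k ∧ pat i = pat (k-i) ∧ pat (k-i) = pat k
  · rw [if_pos hC, one_mul, ← tri_card]
    apply Finset.card_le_card_of_injOn
      (fun q => (⟨q.2 - (t*k+1), q.1 - (t*i+1)⟩ : Σ _ : ℕ, ℕ))
    · intro q hq
      have hmem := Finset.mem_of_mem_filter q hq
      have hjq : (q.2 - q.1 - 1)/t = k - i := (Finset.mem_filter.1 hq).2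
      obtain ⟨-, -, h1, h2, h3, h4, h5, h6, -, -⟩ := cell_facts ht hmem
      rw [hjq] at h5 h6
      have hmul : t*i + t*(k-i) = t*k := by
        rw [← Nat.mul_add, Nat.add_sub_cancel' hC.1]
      simp only [Finset.mem_coe, Finset.mem_sigma, Finset.mem_range]
      constructor
      · omega
      · omega
    · intro q1 h1 q2 h2 heq
      have e1 : q1.2 - (t*k+1) = q2.2 - (t*k+1) := congrArg Sigma.fst heq
      have e2 : q1.1 - (t*i+1) = q2.1 - (t*i+1) := congrArg Sigma.snd heq
      obtain ⟨-, -, a1, -, a3, -, -, -, -, -⟩ :=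
        cell_facts ht (Finset.mem_of_mem_filter _ (Finset.mem_coe.1 h1))
      obtain ⟨-, -, b1, -, b3, -, -, -, -, -⟩ :=
        cell_facts ht (Finset.mem_of_mem_filter _ (Finset.mem_coe.1 h2))
      have h12 : q1.1 = q2.1 ∧ q1.2 = q2.2 := by omega
      exact Prod.ext_iff.mpr h12
  · rw [if_neg hC, Nat.zero_mul, Nat.le_zero, Finset.card_eq_zero,
      Finset.eq_empty_iff_forall_notMem]
    intro q hq
    refine hC ?_
    have hmem := Finset.mem_of_mem_filter q hq
    have hjq : (q.2 - q.1 - 1)/t = k - i := (Finset.mem_filter.1 hq).2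
    obtain ⟨p1, p2, -, -, -, -, -, -, h7, -⟩ := cell_facts ht hmem
    rw [hjq] at p1 p2 h7
    exact ⟨by omega, p1, p2⟩

lemma cellB (t n i k : ℕ) (ht : 0 < t) :
    ((cell t n i k).filter (fun q => ¬((q.2 - q.1 - 1)/t = k - i))).card ≤
      (if i < k ∧ pat i = pat (k-i-1) ∧ pat (k-i-1) = pat k then 1 else 0) *
        (∑ u ∈ range t, (u+1)) := by
  by_cases hC : i < k ∧ pat i = pat (k-i-1) ∧ pat (k-i-1) = pat k
  · rw [if_pos hC, one_mul, ← tri_card]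
    apply Finset.card_le_card_of_injOn
      (fun q => (⟨q.1 - (t*i+1), q.2 - (t*k+1)⟩ : Σ _ : ℕ, ℕ))
    · intro q hq
      have hmem := Finset.mem_of_mem_filter q hq
      have hjq : ¬((q.2 - q.1 - 1)/t = k - i) := (Finset.mem_filter.1 hq).2
      obtain ⟨-, -, h1, h2, h3, h4, h5, h6, h7, h8⟩ := cell_facts ht hmem
      generalize hJ : (q.2 - q.1 - 1)/t = j at hjq h5 h6 h7 h8
      have hk' : k = i + j + 1 := by omega
      have hmul : t*k = t*i + t*j + t := by
        rw [hk', Nat.mul_add, Nat.mul_add, Nat.mul_one]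
      simp only [Finset.mem_coe, Finset.mem_sigma, Finset.mem_range]
      constructor
      · omega
      · omega
    · intro q1 h1 q2 h2 heq
      have e1 : q1.1 - (t*i+1) = q2.1 - (t*i+1) := congrArg Sigma.fst heq
      have e2 : q1.2 - (t*k+1) = q2.2 - (t*k+1) := congrArg Sigma.snd heq
      obtain ⟨-, -, a1, -, a3, -, -, -, -, -⟩ :=
        cell_facts ht (Finset.mem_of_mem_filter _ (Finset.mem_coe.1 h1))
      obtain ⟨-, -, b1, -, b3, -, -, -, -, -⟩ :=
        cell_facts ht (Finset.mem_of_mem_filter _ (Finset.mem_coe.1 h2))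
      have h12 : q1.1 = q2.1 ∧ q1.2 = q2.2 := by omega
      exact Prod.ext_iff.mpr h12
  · rw [if_neg hC, Nat.zero_mul, Nat.le_zero, Finset.card_eq_zero,
      Finset.eq_empty_iff_forall_notMem]
    intro q hq
    refine hC ?_
    have hmem := Finset.mem_of_mem_filter q hq
    have hjq : ¬((q.2 - q.1 - 1)/t = k - i) := (Finset.mem_filter.1 hq).2
    obtain ⟨p1, p2, -, -, -, -, -, -, h7, h8⟩ := cell_facts ht hmem
    generalize hJ : (q.2 - q.1 - 1)/t = j at hjq p1 p2 h7 h8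
    have hk' : k = i + j + 1 := by omega
    refine ⟨by omega, ?_, ?_⟩ <;> rw [show k - i - 1 = j by omega]
    · exact p1
    · exact p2

lemma cell_bound (t n i k : ℕ) (ht : 0 < t) :
    (cell t n i k).card ≤ cnt i k * (∑ u ∈ range t, (u+1)) := by
  simp only [cnt, Nat.add_mul]
  rw [← Finset.card_filter_add_card_filter_not
    (s := cell t n i k) (p := fun q => (q.2 - q.1 - 1)/t = k - i)]
  exact Nat.add_le_add (cellA t n i k ht) (cellB t n i k ht)

lemma gauss (t : ℕ) : (∑ u ∈ range t, (u+1)) * 2 = t * (t+1) := by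
  have h2 : ∑ i ∈ range (t+1), i = ∑ u ∈ range t, (u+1) := by
    rw [Finset.sum_range_succ']; simp
  have h := Finset.sum_range_id_mul_two (t+1)
  rw [h2] at h
  rw [h, Nat.add_sub_cancel, Nat.mul_comm]

lemma main_bound (t n : ℕ) (ht : 0 < t) (hnt : n < 67 * t) :
    (((Finset.Icc 1 n) ×ˢ (Finset.Icc 1 n) ×ˢ (Finset.Icc 1 n)).filter
      (fun p => p.1 + p.2.1 = p.2.2 ∧
        pat ((p.1 - 1)/t) = pat ((p.2.1 - 1)/t) ∧
        pat ((p.2.1 - 1)/t) = pat ((p.2.2 - 1)/t))).card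
      ≤ 134 * (∑ u ∈ range t, (u+1)) := by
  have step1 :
      (((Finset.Icc 1 n) ×ˢ (Finset.Icc 1 n) ×ˢ (Finset.Icc 1 n)).filter
        (fun p => p.1 + p.2.1 = p.2.2 ∧
          pat ((p.1 - 1)/t) = pat ((p.2.1 - 1)/t) ∧
          pat ((p.2.1 - 1)/t) = pat ((p.2.2 - 1)/t))).card ≤ (Spairs t n).card := by
    apply Finset.card_le_card_of_injOn (fun p => (p.1, p.2.2))
    · intro p hp
      simp only [Finset.mem_coe, Finset.mem_filter, Finset.mem_product, Finset.mem_Icc] at hp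
      obtain ⟨⟨⟨hx1, hxn⟩, ⟨hy1, hyn⟩, hz1, hzn⟩, hsum, hc1, hc2⟩ := hp
      simp only [Finset.mem_coe, Spairs, Finset.mem_filter, Finset.mem_product, Finset.mem_Icc]
      have hyx : p.2.2 - p.1 = p.2.1 := by omega
      refine ⟨⟨⟨hx1, hxn⟩, hz1, hzn⟩, by omega, ?_, ?_⟩ <;> rw [hyx]
      · exact hc1
      · exact hc2
    · intro p1 h1 p2 h2 heq
      have hh1 := (Finset.mem_filter.1 (Finset.mem_coe.1 h1)).2.1
      have hh2 := (Finset.mem_filter.1 (Finset.mem_coe.1 h2)).2.1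
      have heq' : (p1.1, p1.2.2) = (p2.1, p2.2.2) := heq
      injection heq' with e1 e2
      have e3 : p1.2.1 = p2.2.1 := by omega
      exact Prod.ext_iff.mpr ⟨e1, Prod.ext_iff.mpr ⟨e3, e2⟩⟩
  have step2 : (Spairs t n).card ≤
      ∑ i ∈ range 67, ∑ k ∈ range 67, (cell t n i k).card := by
    have hsub : Spairs t n ⊆
        (range 67).biUnion (fun i => (range 67).biUnion (fun k => cell t n i k)) := by
      intro q hq
      have hq' := hq
      simp only [Spairs, Finset.mem_filter, Finset.mem_product, Finset.mem_Icc] at hq'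
      obtain ⟨⟨⟨hx1, hxn⟩, hz1, hzn⟩, -, -⟩ := hq'
      simp only [Finset.mem_biUnion, Finset.mem_range]
      refine ⟨(q.1-1)/t, (Nat.div_lt_iff_lt_mul ht).2 (by omega),
        (q.2-1)/t, (Nat.div_lt_iff_lt_mul ht).2 (by omega), ?_⟩
      exact Finset.mem_filter.mpr ⟨hq, rfl, rfl⟩
    calc (Spairs t n).card
        ≤ ((range 67).biUnion (fun i => (range 67).biUnion (fun k => cell t n i k))).card :=
          Finset.card_le_card hsub
      _ ≤ ∑ i ∈ range 67, ((range 67).biUnion (fun k => cell t n i k)).card :=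
          Finset.card_biUnion_le
      _ ≤ ∑ i ∈ range 67, ∑ k ∈ range 67, (cell t n i k).card :=
          Finset.sum_le_sum (fun i _ => Finset.card_biUnion_le)
  have step3 : ∑ i ∈ range 67, ∑ k ∈ range 67, (cell t n i k).card ≤
      134 * (∑ u ∈ range t, (u+1)) := by
    calc ∑ i ∈ range 67, ∑ k ∈ range 67, (cell t n i k).card
        ≤ ∑ i ∈ range 67, ∑ k ∈ range 67, cnt i k * (∑ u ∈ range t, (u+1)) :=
          Finset.sum_le_sum (fun i _ => Finset.sum_le_sum (fun k _ => cell_bound t n i k ht))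
      _ = 134 * (∑ u ∈ range t, (u+1)) := by
          simp only [← Finset.sum_mul]
          rw [cnt_sum]
  exact le_trans step1 (le_trans step2 step3)

/-- There is a constant `C ≥ 0` such that for every `n ≥ 1` there is a 3-coloring of `[n]`
with at most `n²/67 + C·n` monochromatic Schur triples, i.e.
`M_Schur(n,3) ≤ n²/67 + C·n`. -/
theorem stmt12 :
    ∃ C : ℝ, 0 ≤ C ∧ ∀ n : ℕ, 0 < n →
      ∃ χ : ℕ → Fin 3,
        ((((Finset.Icc 1 n) ×ˢ (Finset.Icc 1 n) ×ˢ (Finset.Icc 1 n)).filter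
          (fun p => p.1 + p.2.1 = p.2.2 ∧
            χ p.1 = χ p.2.1 ∧ χ p.2.1 = χ p.2.2)).card : ℝ)
        ≤ (n : ℝ) ^ 2 / 67 + C * n := by
  refine ⟨137, by norm_num, fun n hn => ?_⟩
  refine ⟨fun x => pat ((x - 1) / (n / 67 + 1)), ?_⟩
  have keyN := main_bound (n / 67 + 1) n (by omega) (by omega)
  have hfinal : ((134 * (∑ u ∈ range (n/67+1), (u+1)) : ℕ) : ℝ) ≤
      (n:ℝ)^2/67 + 137*(n:ℝ) := by
    have hg := gauss (n/67+1)
    have hTR : ((∑ u ∈ range (n/67+1), (u+1) : ℕ) : ℝ) * 2 =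
        ((n/67+1 : ℕ):ℝ) * (((n/67+1 : ℕ):ℝ) + 1) := by exact_mod_cast hg
    have htR : ((n/67+1 : ℕ):ℝ) ≤ (n:ℝ)/67 + 1 := by
      have h := Nat.cast_div_le (α := ℝ) (m := n) (n := 67)
      push_cast at h ⊢
      linarith
    have hn1 : (1:ℝ) ≤ (n:ℝ) := by exact_mod_cast hn
    have ht0 : (0:ℝ) ≤ ((n/67+1 : ℕ):ℝ) := Nat.cast_nonneg _
    have hsq : ((n/67+1 : ℕ):ℝ) * (((n/67+1 : ℕ):ℝ) + 1) ≤
        ((n:ℝ)/67 + 1) * ((n:ℝ)/67 + 2) := by nlinarith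
    rw [Nat.cast_mul, Nat.cast_ofNat]
    linarith
  exact le_trans (Nat.cast_le.mpr keyN) hfinal
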